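/- arXiv:1402.4681 — 2 statements merged into one kernel-verified Lean document; each statement's English description precedes it below -/
import Mathlib

section
/- Let a be a regular finite-dimensional algebraic Lie algebra over k admitting an adapted pair (h, η), V an ad h stable complement to (ad a)η in a*, and ψ : S(a_Z) → k[η+V] the restriction of polynomial functions on a_Z* to the linear subvariety η + V. Then for every nonzero semi-invariant q ∈ Sy(a_Z) one has ψ(q) ≠ 0; consequently ψ restricts to an injective algebra homomorphism from Y(a_Z) into k[η+V]. -/
open Module

section Core

variable (k : Type*) [Field k] [IsAlgClosed k] [CharZero k]
variable (L : Type*) [LieRing L] [LieAlgebra k L] [Module.Finite k L]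

/-- The stabiliser `a^ξ` of `ξ ∈ a*` under the coadjoint action of `a`. -/
def coadStab (ξ : Module.Dual k L) : Submodule k L where
  carrier := {x : L | ∀ y : L, ξ ⁅x, y⁆ = 0}
  add_mem' := fun {a b} ha hb y => by rw [add_lie, map_add, ha y, hb y, add_zero]
  zero_mem' := fun y => by rw [zero_lie, map_zero]
  smul_mem' := fun c a ha y => by rw [smul_lie, map_smul, ha y, smul_zero]

/-- The index `ℓ(a)` of a Lie algebra: the minimal dimension of a coadjoint stabiliser. -/
noncomputable def lieIndex : ℕ := ⨅ ξ : Module.Dual k L, finrank k (coadStab k L ξ)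

/-- `ξ ∈ a*` is regular if its stabiliser has dimension equal to the index. -/
def IsRegularCovector (ξ : Module.Dual k L) : Prop :=
  finrank k (coadStab k L ξ) = lieIndex k L

/-- An adapted pair `(h, η)`: `ad h` is a semisimple (diagonalisable) endomorphism, `η` is a
regular element of `a*`, and `(ad h)η = -η`, i.e. `η ∘ ad h = η`. -/
structure IsAdaptedPair (h : L) (η : Module.Dual k L) : Prop where
  semisimple : ⨆ μ : k, (LieAlgebra.ad k L h).eigenspace μ = ⊤
  regular : IsRegularCovector k L η
  eigen : ∀ y : L, η ⁅h, y⁆ = η y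

/-- `a_ℤ`, the sum of the integer eigenspaces of `ad h`. -/
noncomputable def intPart (h : L) : Submodule k L :=
  ⨆ n : ℤ, (LieAlgebra.ad k L h).eigenspace (n : k)

/-- `c`, the span of the `ad h` eigenvectors with eigenvalues in `k ∖ ℤ`. -/
noncomputable def nonIntPart (h : L) : Submodule k L :=
  ⨆ μ : {μ : k // ∀ n : ℤ, μ ≠ (n : k)}, (LieAlgebra.ad k L h).eigenspace (μ : k)

/-- The stabiliser of (the restriction of) `ξ` relative to the subalgebra with
underlying submodule `A`:  `{x ∈ A | ξ⁅x, A⁆ = 0}`. -/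
def relStab (A : Submodule k L) (ξ : Module.Dual k L) : Submodule k L where
  carrier := {x : L | x ∈ A ∧ ∀ y ∈ A, ξ ⁅x, y⁆ = 0}
  add_mem' := fun {a b} ha hb =>
    ⟨A.add_mem ha.1 hb.1, fun y hy => by rw [add_lie, map_add, ha.2 y hy, hb.2 y hy, add_zero]⟩
  zero_mem' := ⟨A.zero_mem, fun y _ => by rw [zero_lie, map_zero]⟩
  smul_mem' := fun c a ha =>
    ⟨A.smul_mem c ha.1, fun y hy => by rw [smul_lie, map_smul, ha.2 y hy, smul_zero]⟩

/-- The index of the Lie subalgebra with underlying submodule `A` (every functional on `A`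
extends to `L`, so it suffices to range over `L*`). -/
noncomputable def relIndex (A : Submodule k L) : ℕ :=
  ⨅ ξ : Module.Dual k L, finrank k (relStab k L A ξ)

/-- Regularity of (the restriction to `A` of) `ξ` for the subalgebra `A`. -/
def IsRelRegular (A : Submodule k L) (ξ : Module.Dual k L) : Prop :=
  finrank k (relStab k L A ξ) = relIndex k L A

/-- The linear map `x ↦ (ad x)η = -η ∘ ad x` (coadjoint action applied to `η`). -/
noncomputable def coadMap (η : Module.Dual k L) : L →ₗ[k] Module.Dual k L where
  toFun x := -(η ∘ₗ (LieAlgebra.ad k L x))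
  map_add' x y := by ext z; simp [add_lie]; ring
  map_smul' c x := by ext z; simp [smul_lie]

/-- `(ad a)η`, the tangent space at `η` of the coadjoint orbit of `η`. -/
noncomputable def coadOrbit (η : Module.Dual k L) : Submodule k (Module.Dual k L) :=
  LinearMap.range (coadMap k L η)

/-- The coadjoint action of `h` on `a*`, as an endomorphism of `a*`. -/
noncomputable def coadEnd (h : L) : Module.End k (Module.Dual k L) :=
  -((LieAlgebra.ad k L h).dualMap)

/-- The truncated exponential of `ad x`; this equals `exp (ad x)` whenever `ad x` is
nilpotent (its nilpotency index is at most `dim L`). -/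
noncomputable def expAd (x : L) : Module.End k L :=
  ∑ i ∈ Finset.range (finrank k L + 1), (i.factorial : k)⁻¹ • (LieAlgebra.ad k L x) ^ i

end Core

section Sym

variable {k : Type*} [Field k] [IsAlgClosed k] [CharZero k]
variable {M : Type*} [LieRing M] [LieAlgebra k M]

/-- The action of `x ∈ M` on the symmetric algebra `S(M)`, realised as the polynomial algebra
on the coordinates of the basis `b`, by the unique derivation extending `ad x`. -/
noncomputable def lieDer {n : ℕ} (b : Basis (Fin n) k M) (x : M) :
    Derivation k (MvPolynomial (Fin n) k) (MvPolynomial (Fin n) k) :=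
  MvPolynomial.mkDerivation k fun i => ∑ j, b.repr ⁅x, b i⁆ j • MvPolynomial.X j

/-- A character of a Lie algebra: a linear functional vanishing on brackets. -/
def IsLieChar (lam : Module.Dual k M) : Prop := ∀ x y : M, lam ⁅x, y⁆ = 0

/-- `p` is a semi-invariant of `S(M)` of weight the character `lam`. -/
def IsSemiInvariantWt {n : ℕ} (b : Basis (Fin n) k M) (p : MvPolynomial (Fin n) k)
    (lam : Module.Dual k M) : Prop :=
  p ≠ 0 ∧ IsLieChar lam ∧ ∀ x : M, lieDer b x p = lam x • p

/-- `p` is a semi-invariant of `S(M)`. -/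
def IsSemiInvariant {n : ℕ} (b : Basis (Fin n) k M) (p : MvPolynomial (Fin n) k) : Prop :=
  ∃ lam : Module.Dual k M, IsSemiInvariantWt b p lam

/-- `Y(M) = S(M)^M`, the subalgebra of invariants. -/
def lieInvariants {n : ℕ} (b : Basis (Fin n) k M) : Subalgebra k (MvPolynomial (Fin n) k) where
  carrier := {p | ∀ x : M, lieDer b x p = 0}
  mul_mem' := fun {p q} hp hq x => by
    rw [Derivation.leibniz, hp x, hq x, smul_zero, smul_zero, add_zero]
  add_mem' := fun {p q} hp hq x => by rw [map_add, hp x, hq x, add_zero]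
  algebraMap_mem' := fun r x => by simp

/-- The action on `S(d)`, for `d` an ideal of `M`, of an element `y ∈ M`, by the derivation
extending `ad y`. -/
noncomputable def lieDerOn (d : LieIdeal k M) {nd : ℕ} (bd : Basis (Fin nd) k d) (y : M) :
    Derivation k (MvPolynomial (Fin nd) k) (MvPolynomial (Fin nd) k) :=
  MvPolynomial.mkDerivation k fun i =>
    ∑ j, bd.repr ⟨⁅y, ((bd i : d) : M)⁆, d.lie_mem (bd i).2⟩ j • MvPolynomial.X j

end Sym

/-- A subalgebra `B` of a commutative `k`-algebra is a polynomial algebra over `k`: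
it is freely generated by finitely many algebraically independent elements. -/
def IsPolynomialAlgebra (k : Type*) {A : Type*} [CommRing k] [CommRing A] [Algebra k A]
    (B : Subalgebra k A) : Prop :=
  ∃ (n : ℕ) (g : Fin n → A), (∀ i, g i ∈ B) ∧ AlgebraicIndependent k g ∧
    Algebra.adjoin k (Set.range g) = B

section Reg

variable (k : Type*) [Field k] [IsAlgClosed k] [CharZero k]
variable (L : Type*) [LieRing L] [LieAlgebra k L] [Module.Finite k L]

/-- A Lie algebra is regular if it has no proper semi-invariants, i.e. `Sy(a) = Y(a)`,
and `Y(a)` is a polynomial algebra. -/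
def IsRegularLieAlgebra : Prop :=
  Submodule.span k {p | IsSemiInvariant (Module.finBasis k L) p} =
      Subalgebra.toSubmodule (lieInvariants (Module.finBasis k L)) ∧
    IsPolynomialAlgebra k (lieInvariants (Module.finBasis k L))

end Reg

section Struct

variable (k : Type*) [Field k]
variable (L : Type*) [LieRing L] [LieAlgebra k L]

/-- A Lie algebra is reductive if its radical coincides with its centre. -/
def IsReductiveLie : Prop := LieAlgebra.radical k L = LieAlgebra.center k L

/-- `m` is the nilradical of `L`: the largest nilpotent ideal. -/
def IsNilradicalOf (m : LieIdeal k L) : Prop :=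
  LieRing.IsNilpotent m ∧ ∀ I : LieIdeal k L, LieRing.IsNilpotent I → I ≤ m

/-- `H` is a Cartan subalgebra of the subalgebra `r`: contained in `r`, nilpotent and
self-normalising in `r`. -/
def IsCartanIn (H r : LieSubalgebra k L) : Prop :=
  H ≤ r ∧ LieRing.IsNilpotent H ∧ ∀ x ∈ r, (∀ y ∈ H, ⁅x, y⁆ ∈ H) → x ∈ H

/-- The weight space of `α ∈ H*` in `L`, for the adjoint action of the subalgebra `H`. -/
def hWeightSpace (H : LieSubalgebra k L) (α : Module.Dual k H) : Submodule k L where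
  carrier := {x : L | ∀ t : H, ⁅(t : L), x⁆ = α t • x}
  add_mem' := fun {a b} ha hb t => by rw [lie_add, ha t, hb t, smul_add]
  zero_mem' := fun t => by rw [lie_zero, smul_zero]
  smul_mem' := fun c a ha t => by rw [lie_smul, ha t, smul_comm]

/-- Restriction of a linear functional along an inclusion of Lie subalgebras. -/
noncomputable def restrictChar {k L} [Field k] [LieRing L] [LieAlgebra k L]
    {H K : LieSubalgebra k L} (hHK : H ≤ K) (lam : Module.Dual k K) : Module.Dual k H :=
  lam ∘ₗ (LieSubalgebra.inclusion hHK).toLinearMap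

/-- Evaluation of an element of `S(a_ℤ)` (in the coordinates of the basis `bz`) at the point
`ξ` of `a_ℤ*` obtained by restricting `ξ ∈ a*`; this realises the restriction map `ψ` of
functions to the linear subvariety `η + V`. -/
noncomputable def secEval {k L} [Field k] [LieRing L] [LieAlgebra k L]
    {aZ : LieSubalgebra k L} {nz : ℕ} (bz : Basis (Fin nz) k aZ)
    (ξ : Module.Dual k L) (p : MvPolynomial (Fin nz) k) : k :=
  MvPolynomial.eval (fun i => ξ (bz i)) p

end Struct

namespace PsiAux
open MvPolynomial

variable {k : Type*} [CommRing k] {n m : ℕ}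

/-- Directional derivative in direction `d`. -/
noncomputable def dd (d : Fin n → k) :
    Derivation k (MvPolynomial (Fin n) k) (MvPolynomial (Fin n) k) :=
  MvPolynomial.mkDerivation k fun i => MvPolynomial.C (d i)

@[simp] theorem dd_X (d : Fin n → k) (i : Fin n) : dd d (X i) = C (d i) :=
  mkDerivation_X _ _ _

theorem dd_C (a : Fin n → k) (x : k) : dd a (C x) = 0 := by
  rw [show (C x : MvPolynomial (Fin n) k) = algebraMap k _ x from rfl,
    Derivation.map_algebraMap]

theorem dd_add_dir (d e : Fin n → k) :
    (dd (d + e) : Derivation k (MvPolynomial (Fin n) k) (MvPolynomial (Fin n) k))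
      = dd d + dd e := by
  apply derivation_ext
  intro i
  simp [Derivation.add_apply, map_add]

/-- A "linear" derivation with matrix `c`. -/
noncomputable def lder (c : Fin n → Fin n → k) :
    Derivation k (MvPolynomial (Fin n) k) (MvPolynomial (Fin n) k) :=
  MvPolynomial.mkDerivation k fun i => ∑ j, c i j • X j

@[simp] theorem lder_X (c : Fin n → Fin n → k) (i : Fin n) :
    lder c (X i) = ∑ j, c i j • X j :=
  mkDerivation_X _ _ _

/-- Matrix times vector. -/
def amul (c : Fin n → Fin n → k) (d : Fin n → k) : Fin n → k :=
  fun i => ∑ j, c i j * d j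

theorem amul_apply (c : Fin n → Fin n → k) (d : Fin n → k) (i : Fin n) :
    amul c d i = ∑ j, c i j * d j := rfl

theorem dd_comm (d e : Fin n → k) (p : MvPolynomial (Fin n) k) :
    dd d (dd e p) = dd e (dd d p) := by
  have h : (⁅dd d, dd e⁆ : Derivation k (MvPolynomial (Fin n) k) (MvPolynomial (Fin n) k)) = 0 := by
    apply derivation_ext
    intro i
    simp [Derivation.commutator_apply, dd, Derivation.map_algebraMap,
      ← MvPolynomial.algebraMap_eq]
  have := congrArg (fun D : Derivation k (MvPolynomial (Fin n) k) (MvPolynomial (Fin n) k) => D p) h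
  simp only [Derivation.commutator_apply] at this
  simpa [sub_eq_zero] using this

theorem dd_lder (c : Fin n → Fin n → k) (d : Fin n → k) (p : MvPolynomial (Fin n) k) :
    dd d (lder c p) = lder c (dd d p) + dd (amul c d) p := by
  have h : (⁅dd d, lder c⁆ : Derivation k (MvPolynomial (Fin n) k) (MvPolynomial (Fin n) k))
      = dd (amul c d) := by
    apply derivation_ext
    intro i
    have h1 : dd d (lder c (X i)) = ∑ j, c i j • C (d j) := by
      rw [lder_X, map_sum]
      congr 1; ext j
      rw [Derivation.map_smul, dd_X]
    have h2 : lder c (dd d (X i)) = 0 := by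
      rw [dd_X, ← MvPolynomial.algebraMap_eq, Derivation.map_algebraMap]
    rw [Derivation.commutator_apply, h1, h2, sub_zero, dd_X, amul]
    rw [map_sum]
    congr 1; ext j
    rw [smul_eq_C_mul, ← map_mul]
  have := congrArg (fun D : Derivation k (MvPolynomial (Fin n) k) (MvPolynomial (Fin n) k) => D p) h
  simp only [Derivation.commutator_apply] at this
  linear_combination (norm := ring_nf) this

/-- Iterated directional derivatives along a list of directions. -/
noncomputable def DL (l : List (Fin n → k)) (p : MvPolynomial (Fin n) k) :
    MvPolynomial (Fin n) k :=
  l.foldr (fun d r => dd d r) p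

@[simp] theorem DL_nil (p : MvPolynomial (Fin n) k) : DL [] p = p := rfl

@[simp] theorem DL_cons (d : Fin n → k) (l : List (Fin n → k)) (p : MvPolynomial (Fin n) k) :
    DL (d :: l) p = dd d (DL l p) := rfl

theorem DL_append (l₁ l₂ : List (Fin n → k)) (p : MvPolynomial (Fin n) k) :
    DL (l₁ ++ l₂) p = DL l₁ (DL l₂ p) := by
  induction l₁ with
  | nil => rfl
  | cons d l ih => simp [ih]

theorem dd_DL (d : Fin n → k) (l : List (Fin n → k)) (p : MvPolynomial (Fin n) k) :
    dd d (DL l p) = DL l (dd d p) := by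
  induction l with
  | nil => rfl
  | cons e l ih => simp [dd_comm d e, ih]

theorem DL_smul (l : List (Fin n → k)) (a : k) (p : MvPolynomial (Fin n) k) :
    DL l (a • p) = a • DL l p := by
  induction l with
  | nil => rfl
  | cons d l ih => simp [ih, Derivation.map_smul]

theorem DL_perm {l₁ l₂ : List (Fin n → k)} (h : l₁.Perm l₂) (p : MvPolynomial (Fin n) k) :
    DL l₁ p = DL l₂ p := by
  induction h with
  | nil => rfl
  | cons d _ ih => simp [ih]
  | swap d e l => simp [dd_comm]
  | trans _ _ ih1 ih2 => rw [ih1, ih2]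

theorem set_perm {α : Type*} (d : α) : ∀ (l : List α) (j : ℕ), j < l.length →
    (l.set j d).Perm (d :: l.eraseIdx j)
  | a :: l, 0, _ => by simp
  | a :: l, j + 1, h => by
      simpa using ((set_perm d l j (by simpa using h)).cons a).trans (List.Perm.swap d a _)

theorem set_append_left {α : Type*} (d : α) : ∀ (u v : List α) (j : ℕ), j < u.length →
    (u ++ v).set j d = u.set j d ++ v
  | a :: u, v, 0, _ => by simp
  | a :: u, v, j + 1, h => by
      simp only [List.cons_append, List.set_cons_succ]
      rw [set_append_left d u v j (by simpa using h)]
  | [], v, j, h => by simp at h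

theorem eraseIdx_append_right {α : Type*} : ∀ (u v : List α) (j : ℕ), u.length ≤ j →
    (u ++ v).eraseIdx j = u ++ v.eraseIdx (j - u.length)
  | [], v, j, _ => by simp
  | a :: u, v, j + 1, h => by
      simp only [List.cons_append, List.eraseIdx_cons_succ]
      rw [eraseIdx_append_right u v j (by simpa using h)]
      simp [Nat.succ_sub_succ]
  | a :: u, v, 0, h => by simp at h

/-- Commuting a linear derivation through iterated directional derivatives. -/
theorem lder_DL (c : Fin n → Fin n → k) : ∀ (l : List (Fin n → k)) (p : MvPolynomial (Fin n) k),
    lder c (DL l p) = DL l (lder c p)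
      - ∑ j ∈ Finset.range l.length, DL (l.set j (amul c (l.getD j 0))) p
  | [], p => by simp [DL]
  | d :: l, p => by
      have h1 : lder c (DL (d :: l) p) = dd d (lder c (DL l p)) - dd (amul c d) (DL l p) := by
        rw [DL_cons, dd_lder]; abel
      rw [h1, lder_DL c l p, map_sub, map_sum]
      have h2 : ∀ j, dd d (DL (l.set j (amul c (l.getD j 0))) p)
          = DL ((d :: l).set (j + 1) (amul c ((d :: l).getD (j + 1) 0))) p := by
        intro j
        simp [DL_cons]
      have h3 : (List.length (d :: l)) = l.length + 1 := rfl
      rw [h3, Finset.sum_range_succ']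
      simp only [h2, List.set_cons_zero, List.getD_cons_zero]
      rw [DL_cons]
      have h4 : dd (amul c d) (DL l p) = DL ((amul c d) :: l) p := (DL_cons _ _ _).symm
      rw [h4]
      abel

/-- Two derivations whose values on generators agree after evaluation at `c`
give the same values on any polynomial after evaluation at `c`. -/
theorem eval_derivation_congr (c : Fin n → k)
    (D₁ D₂ : Derivation k (MvPolynomial (Fin n) k) (MvPolynomial (Fin n) k))
    (h : ∀ i, eval c (D₁ (X i)) = eval c (D₂ (X i))) (p : MvPolynomial (Fin n) k) :
    eval c (D₁ p) = eval c (D₂ p) := by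
  induction p using MvPolynomial.induction_on with
  | C a =>
      rw [← MvPolynomial.algebraMap_eq, Derivation.map_algebraMap, Derivation.map_algebraMap]
  | add p q hp hq => simp only [map_add, hp, hq]
  | mul_X p i hp =>
      rw [Derivation.leibniz, Derivation.leibniz]
      simp only [smul_eq_mul, map_add, map_mul, hp, h i]

/-- Parametrisation of the affine subspace `c₀ + span w`. -/
noncomputable def θmap (c₀ : Fin n → k) (w : Fin m → Fin n → k) :
    MvPolynomial (Fin n) k →ₐ[k] MvPolynomial (Fin m) k :=
  aeval fun i => C (c₀ i) + ∑ s, w s i • X s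

theorem eval_θmap (c₀ : Fin n → k) (w : Fin m → Fin n → k) (y : Fin m → k)
    (p : MvPolynomial (Fin n) k) :
    eval y (θmap c₀ w p) = eval (fun i => c₀ i + ∑ s, w s i * y s) p := by
  induction p using MvPolynomial.induction_on with
  | C a => simp [θmap]
  | add p q hp hq => simp only [map_add, hp, hq]
  | mul_X p i hp =>
      simp only [map_mul, hp, θmap, aeval_X]
      congr 1
      simp [smul_eval]

theorem θmap_dd (c₀ : Fin n → k) (w : Fin m → Fin n → k) (a : Fin m → k)
    (p : MvPolynomial (Fin n) k) :
    θmap c₀ w (dd (fun i => ∑ s, a s * w s i) p) = dd a (θmap c₀ w p) := by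
  induction p using MvPolynomial.induction_on with
  | C r =>
      rw [dd_C, map_zero, show θmap c₀ w (C r) = C r from by simp [θmap], dd_C]
  | add p q hp hq => simp only [map_add, hp, hq]
  | mul_X p i hp =>
      have hX : θmap c₀ w ((dd fun i => ∑ s, a s * w s i) (X i)) = dd a (θmap c₀ w (X i)) := by
        rw [dd_X, show θmap c₀ w (C (∑ s, a s * w s i)) = C (∑ s, a s * w s i) from
          by simp [θmap],
          show θmap c₀ w (X i) = C (c₀ i) + ∑ s, w s i • X s from aeval_X _ i,
          map_add, dd_C, zero_add, map_sum]
        rw [map_sum]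
        refine Finset.sum_congr rfl fun s _ => ?_
        rw [Derivation.map_smul, dd_X, smul_eq_C_mul, ← map_mul, mul_comm]
      simp only [map_mul, Derivation.leibniz, smul_eq_mul, map_add, map_mul, hp, hX]
      try ring

theorem dd_single_eq_pderiv (i : Fin n) :
    (dd (Pi.single i 1) : Derivation k (MvPolynomial (Fin n) k) (MvPolynomial (Fin n) k))
      = pderiv i := by
  apply derivation_ext
  intro j
  classical
  rw [pderiv_X]
  simp only [dd, mkDerivation_X]
  rcases eq_or_ne i j with rfl | hne
  · simp
  · simp [Pi.single_eq_of_ne (Ne.symm hne)]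

theorem degsum_add_single (γ : Fin n →₀ ℕ) (i : Fin n) :
    ((γ + Finsupp.single i 1 : Fin n →₀ ℕ).sum fun _ e => e) = (γ.sum fun _ e => e) + 1 := by
  rw [Finsupp.sum_add_index (by simp) (by intros; rfl)]; simp

theorem coeff_pderiv (i : Fin n) (γ : Fin n →₀ ℕ) (p : MvPolynomial (Fin n) k) :
    coeff γ (pderiv i p) = (γ i + 1) • coeff (γ + Finsupp.single i 1) p := by
  induction p using MvPolynomial.induction_on' with
  | monomial s a =>
      rw [pderiv_monomial, coeff_monomial, coeff_monomial]
      rcases eq_or_ne s (γ + Finsupp.single i 1) with rfl | hne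
      · have h1 : γ + Finsupp.single i 1 - Finsupp.single i 1 = γ := by ext j; simp
        have h2 : ((γ + Finsupp.single i 1 : Fin n →₀ ℕ)) i = γ i + 1 := by simp
        rw [if_pos h1, if_pos rfl, h2, nsmul_eq_mul]
        push_cast
        ring
      · rw [if_neg hne, smul_zero]
        by_cases hle : Finsupp.single i 1 ≤ s
        · have : s - Finsupp.single i 1 ≠ γ := by
            intro hc
            apply hne
            rw [← hc, tsub_add_cancel_of_le hle]
          rw [if_neg this]
        · have hsi : s i = 0 := by
            by_contra hsi
            exact hle (by simpa [Finsupp.single_le_iff] using Nat.one_le_iff_ne_zero.2 hsi)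
          simp [hsi]
  | add p q hp hq => simp [map_add, hp, hq]

theorem pderiv_support_degree {γ : Fin n →₀ ℕ} {i : Fin n} {p : MvPolynomial (Fin n) k}
    (h : coeff γ (pderiv i p) ≠ 0) :
    (γ + Finsupp.single i 1) ∈ p.support := by
  rw [MvPolynomial.mem_support_iff]
  intro hc
  rw [coeff_pderiv, hc, smul_zero] at h
  exact h rfl

theorem totalDegree_pderiv_le (i : Fin n) (p : MvPolynomial (Fin n) k) (D : ℕ)
    (h : p.totalDegree ≤ D + 1) : (pderiv i p).totalDegree ≤ D := by
  apply Finset.sup_le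
  intro γ hγ
  rw [MvPolynomial.mem_support_iff] at hγ
  have hmem := pderiv_support_degree hγ
  have h1 : ((γ + Finsupp.single i 1 : Fin n →₀ ℕ).sum fun _ e => e) ≤ D + 1 :=
    le_trans (MvPolynomial.le_totalDegree hmem) h
  have h2 := degsum_add_single γ i
  omega

section FieldK
variable {k : Type*} [Field k] [CharZero k] {n : ℕ}

theorem eq_C_of_pderiv_eq_zero {p : MvPolynomial (Fin n) k}
    (h : ∀ i, pderiv i p = 0) : p = C (coeff 0 p) := by
  ext γ
  rcases eq_or_ne γ 0 with rfl | hγ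
  · simp
  · rw [coeff_C, if_neg (Ne.symm hγ)]
    obtain ⟨i, hi⟩ : ∃ i, γ i ≠ 0 := by
      by_contra hc
      push_neg at hc
      exact hγ (Finsupp.ext hc)
    have hle : Finsupp.single i 1 ≤ γ := by
      simpa [Finsupp.single_le_iff] using Nat.one_le_iff_ne_zero.2 hi
    have hkey := coeff_pderiv i (γ - Finsupp.single i 1) p
    rw [h i, tsub_add_cancel_of_le hle, coeff_zero] at hkey
    have h2 : ((((γ - Finsupp.single i 1 : Fin n →₀ ℕ)) i + 1 : ℕ) : k) * coeff γ p = 0 := by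
      rw [← nsmul_eq_mul]; exact hkey.symm
    rcases mul_eq_zero.1 h2 with h3 | h3
    · exfalso
      apply Nat.cast_add_one_ne_zero (R := k) (((γ - Finsupp.single i 1 : Fin n →₀ ℕ)) i)
      exact_mod_cast h3
    · exact h3

/-- If all iterated directional derivatives of `p` vanish at a point, `p = 0` (char zero). -/
theorem eq_zero_of_DL_eval (c : Fin n → k) (p : MvPolynomial (Fin n) k)
    (h : ∀ l : List (Fin n → k), eval c (DL l p) = 0) : p = 0 := by
  suffices H : ∀ (D : ℕ) (p : MvPolynomial (Fin n) k), p.totalDegree ≤ D →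
      (∀ l : List (Fin n → k), eval c (DL l p) = 0) → p = 0 from
    H p.totalDegree p le_rfl h
  intro D
  induction D with
  | zero =>
      intro p hdeg h
      have hp : ∀ i, pderiv i p = 0 := by
        intro i
        ext γ
        rw [coeff_pderiv, coeff_zero]
        have hz : coeff (γ + Finsupp.single i 1) p = 0 := by
          apply coeff_eq_zero_of_totalDegree_lt
          have h2 := degsum_add_single γ i
          have h3 : ((γ + Finsupp.single i 1 : Fin n →₀ ℕ).sum fun _ e => e)
              = ∑ j ∈ (γ + Finsupp.single i 1 : Fin n →₀ ℕ).support,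
                  ((γ + Finsupp.single i 1 : Fin n →₀ ℕ)) j := rfl
          omega
        rw [hz, smul_zero]
      have hC := eq_C_of_pderiv_eq_zero hp
      have h0 := h []
      simp only [DL, List.foldr_nil] at h0
      rw [hC, show coeff 0 p = 0 from by rw [hC, eval_C] at h0; exact h0, map_zero]
  | succ D ih =>
      intro p hdeg h
      have hder : ∀ i, pderiv i p = 0 := by
        intro i
        apply ih _ (totalDegree_pderiv_le i p D hdeg)
        intro l
        have hh := h (l ++ [Pi.single i 1])
        rw [DL_append] at hh
        have hsingle : DL [Pi.single i 1] p = pderiv i p := by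
          simp only [DL, List.foldr_cons, List.foldr_nil]
          rw [show (dd (Pi.single i 1) p) = pderiv i p from by rw [dd_single_eq_pderiv]]
        rwa [hsingle] at hh
      have hC := eq_C_of_pderiv_eq_zero hder
      have h0 := h []
      simp only [DL, List.foldr_nil] at h0
      rw [hC, show coeff 0 p = 0 from by rw [hC, eval_C] at h0; exact h0, map_zero]

end FieldK

/-- The main induction: all iterated directional derivatives of a "semi-invariant" `q`
that vanishes (to all orders in `W`-directions) on the affine subspace through `c₀`
vanish at `c₀`. -/
theorem main_vanish (c₀ : Fin n → k) (q : MvPolynomial (Fin n) k)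
    (W : Set (Fin n → k))
    (hdec : ∀ d : Fin n → k, ∃ (c : Fin n → Fin n → k) (lam : k) (w : Fin n → k),
        w ∈ W ∧ d = amul c c₀ + w ∧ lder c q = lam • q)
    (hW : ∀ v : List (Fin n → k), (∀ d ∈ v, d ∈ W) → eval c₀ (DL v q) = 0)
    (l : List (Fin n → k)) : eval c₀ (DL l q) = 0 := by
  suffices H : ∀ (N : ℕ) (u v : List (Fin n → k)), (∀ d ∈ v, d ∈ W) →
      2 * u.length + v.length ≤ N → eval c₀ (DL (u ++ v) q) = 0 by
    have := H (2 * l.length) l [] (by simp) (by simp)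
    simpa using this
  intro N
  induction N with
  | zero =>
      intro u v hv hlen
      match u with
      | [] => exact hW v hv
      | d :: u' =>
          exfalso
          simp only [List.length_cons] at hlen
          omega
  | succ N ih =>
      intro u v hv hlen
      match u with
      | [] => exact hW v hv
      | d :: u' =>
        obtain ⟨c, lam, w, hwW, hd, hsemi⟩ := hdec d
        have hlen' : 2 * u'.length + v.length + 2 ≤ N + 1 := by
          simp only [List.length_cons] at hlen; omega
        have hsplit : DL ((d :: u') ++ v) q
            = dd (amul c c₀) (DL (u' ++ v) q) + dd w (DL (u' ++ v) q) := by
          rw [show ((d :: u') ++ v) = d :: (u' ++ v) from rfl, DL_cons, hd, dd_add_dir]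
          rfl
        rw [hsplit, map_add]
        have hwterm : eval c₀ (dd w (DL (u' ++ v) q)) = 0 := by
          rw [DL_append, dd_DL, ← DL_cons, ← DL_append]
          refine ih u' (w :: v) (fun d' hd' => ?_)
            (by simp only [List.length_cons]; omega)
          rcases List.mem_cons.mp hd' with rfl | h
          exacts [hwW, hv d' h]
        have htterm : eval c₀ (dd (amul c c₀) (DL (u' ++ v) q)) = 0 := by
          rw [eval_derivation_congr c₀ (dd (amul c c₀)) (lder c) (fun i => by
            rw [dd_X, lder_X, map_sum]
            simp only [smul_eval, eval_X, eval_C, amul])]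
          rw [lder_DL, map_sub, hsemi, DL_smul, map_sum]
          have h1 : eval c₀ (DL (u' ++ v) q) = 0 :=
            ih u' v hv (by omega)
          rw [show eval c₀ (lam • DL (u' ++ v) q) = lam * eval c₀ (DL (u' ++ v) q) from
            smul_eval _ _ _, h1, mul_zero]
          rw [zero_sub, neg_eq_zero]
          apply Finset.sum_eq_zero
          intro j hj
          rw [Finset.mem_range, List.length_append] at hj
          set d' := amul c ((u' ++ v).getD j 0) with hd'
          by_cases hju : j < u'.length
          · rw [set_append_left d' u' v j hju]
            exact ih (u'.set j d') v hv (by rw [List.length_set]; omega)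
          · push_neg at hju
            have hjv : j - u'.length < v.length := by omega
            rw [DL_perm (set_perm d' (u' ++ v) j (by rw [List.length_append]; omega)) q,
              eraseIdx_append_right u' v j hju,
              show (d' :: (u' ++ v.eraseIdx (j - u'.length)))
                = (d' :: u') ++ v.eraseIdx (j - u'.length) from rfl]
            refine ih (d' :: u') (v.eraseIdx (j - u'.length))
              (fun e he => hv e (List.mem_of_mem_eraseIdx he)) ?_
            rw [List.length_cons, List.length_eraseIdx_of_lt hjv]
            omega
        rw [hwterm, htterm, add_zero]

end PsiAux


/-- With `ψ` the restriction of polynomial functions on `a_ℤ*` to the linear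
subvariety `η + V`, every nonzero semi-invariant of `S(a_ℤ)` has nonzero image under `ψ`;
consequently `ψ` is injective on the invariant algebra `Y(a_ℤ)`. -/
theorem semiInvariant_psi_ne_zero
    (k : Type*) [Field k] [IsAlgClosed k] [CharZero k]
    (L : Type*) [LieRing L] [LieAlgebra k L] [Module.Finite k L]
    (hreg : IsRegularLieAlgebra k L)
    (h : L) (η : Module.Dual k L) (hpair : IsAdaptedPair k L h η)
    (V : Submodule k (Module.Dual k L))
    (hVc : IsCompl (coadOrbit k L η) V)
    (hVh : ∀ ξ ∈ V, coadEnd k L h ξ ∈ V)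
    (aZ : LieSubalgebra k L) (haZ : aZ.toSubmodule = intPart k L h)
    {nz : ℕ} (bz : Basis (Fin nz) k aZ) :
    (∀ q : MvPolynomial (Fin nz) k, IsSemiInvariant bz q →
        ∃ v ∈ V, secEval bz (η + v) q ≠ 0) ∧
      ∀ p₁ ∈ lieInvariants bz, ∀ p₂ ∈ lieInvariants bz,
        (∀ v ∈ V, secEval bz (η + v) p₁ = secEval bz (η + v) p₂) → p₁ = p₂ := by
  
  classical
  have key : ∀ q : MvPolynomial (Fin nz) k, IsSemiInvariant bz q →
      ∃ v ∈ V, secEval bz (η + v) q ≠ 0 := by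
    intro q hq
    obtain ⟨lam, hqne, hchar, hsemi⟩ := hq
    by_contra hcon
    push_neg at hcon
    apply hqne
    -- the base point, in coordinates
    set c₀ : Fin nz → k := fun i => η (bz i) with hc₀
    -- the structure constants of `a_ℤ` paired against `η`
    set cmat : ↥aZ → Fin nz → Fin nz → k := fun x i j => bz.repr ⁅x, bz i⁆ j with hcmat
    have hlieDer : ∀ x : ↥aZ, lieDer bz x = PsiAux.lder (cmat x) := fun x => rfl
    -- evaluation of η on a_ℤ as a linear functional
    let fη : (↥aZ) →ₗ[k] k := η.comp (aZ.toSubmodule.subtype)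
    have hfη : ∀ z : ↥aZ, η (z : L) = fη z := fun z => rfl
    have hamul : ∀ (x : ↥aZ) (i : Fin nz),
        PsiAux.amul (cmat x) c₀ i = η ((⁅x, bz i⁆ : ↥aZ) : L) := by
      intro x i
      rw [hfη]
      conv_rhs => rw [← bz.sum_repr ⁅x, bz i⁆]
      rw [map_sum, PsiAux.amul_apply]
      refine Finset.sum_congr rfl fun j _ => ?_
      rw [map_smul, smul_eq_mul]
      rfl
    -- every element of L acts on η|_{a_ℤ} like an element of a_ℤ
    have hK1c : ∀ x' : L, ∃ x : ↥aZ, ∀ z : ↥aZ,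
        η ⁅x', (z : L)⁆ = η ⁅(x : L), (z : L)⁆ := by
      intro x'
      let U : Submodule k L :=
        { carrier := {y : L | ∃ x : ↥aZ, ∀ z : ↥aZ, η ⁅y, (z : L)⁆ = η ⁅(x : L), (z : L)⁆}
          add_mem' := by
            rintro a b ⟨xa, ha⟩ ⟨xb, hb⟩
            refine ⟨xa + xb, fun z => ?_⟩
            have hco : ((↑(xa + xb) : L)) = (xa : L) + (xb : L) := rfl
            rw [add_lie, map_add, ha z, hb z, hco, add_lie, map_add]
          zero_mem' := ⟨0, fun z => by
            have hco : ((↑(0 : ↥aZ)) : L) = (0 : L) := rfl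
            rw [zero_lie, map_zero, hco, zero_lie, map_zero]⟩
          smul_mem' := by
            rintro c a ⟨xa, ha⟩
            refine ⟨c • xa, fun z => ?_⟩
            have hco : ((↑(c • xa) : L)) = c • (xa : L) := rfl
            rw [smul_lie, map_smul, ha z, hco, smul_lie, map_smul] }
      have hUeig : ∀ μ : k, (LieAlgebra.ad k L h).eigenspace μ ≤ U := by
        intro μ
        by_cases hμ : ∃ mm : ℤ, (mm : k) = μ
        · obtain ⟨mm, rfl⟩ := hμ
          intro y hy
          have hmem : y ∈ intPart k L h :=
            (le_iSup (fun nn : ℤ => (LieAlgebra.ad k L h).eigenspace (nn : k)) mm) hy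
          rw [← haZ] at hmem
          exact ⟨⟨y, hmem⟩, fun z => rfl⟩
        · push_neg at hμ
          intro y hy
          rw [Module.End.mem_eigenspace_iff] at hy
          have hady : ⁅h, y⁆ = μ • y := hy
          refine ⟨0, fun z => ?_⟩
          have hz0 : ((↑(0 : ↥aZ)) : L) = (0 : L) := rfl
          rw [hz0, zero_lie, map_zero]
          have hker : intPart k L h ≤ LinearMap.ker (η ∘ₗ (LieAlgebra.ad k L y)) := by
            apply iSup_le
            intro nn zz hzz
            rw [Module.End.mem_eigenspace_iff] at hzz
            have hadz : ⁅h, zz⁆ = (nn : k) • zz := hzz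
            rw [LinearMap.mem_ker, LinearMap.comp_apply]
            have hbr : η ⁅y, zz⁆ = (μ + nn) * η ⁅y, zz⁆ := by
              have h1 : ⁅h, ⁅y, zz⁆⁆ = (μ + (nn : k)) • ⁅y, zz⁆ := by
                rw [leibniz_lie, hady, hadz, smul_lie, lie_smul, add_smul]
              have h2 := hpair.eigen ⁅y, zz⁆
              rw [h1, map_smul, smul_eq_mul] at h2
              exact h2.symm
            have hμne : (μ + (nn : k)) - 1 ≠ 0 := by
              intro hc
              exact hμ (1 - nn) (by push_cast; linear_combination -hc)
            have hzero : ((μ + (nn : k)) - 1) * η ⁅y, zz⁆ = 0 := by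
              linear_combination -hbr
            have := (mul_eq_zero.mp hzero).resolve_left hμne
            exact this
          have hzmem : (z : L) ∈ intPart k L h := haZ ▸ z.2
          have hm := hker hzmem
          rw [LinearMap.mem_ker, LinearMap.comp_apply] at hm
          exact hm
      have hmemU : x' ∈ U := by
        have htop : x' ∈ (⊤ : Submodule k L) := trivial
        rw [← hpair.semisimple] at htop
        exact iSup_le hUeig htop
      exact hmemU
    -- basis of V
    have hfdV : FiniteDimensional k ↥V := inferInstance
    haveI : Module.Free k ↥V := Module.Free.of_divisionRing k ↥V
    set mV := Module.finrank k ↥V with hmV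
    set vb : Basis (Fin mV) k ↥V := Module.finBasis k ↥V with hvb
    set wmat : Fin mV → Fin nz → k := fun s i => ((vb s : Module.Dual k L)) ((bz i : L))
      with hwmat
    set Wset : Set (Fin nz → k) :=
      {w | ∃ a : Fin mV → k, w = fun i => ∑ s, a s * wmat s i} with hWset
    -- the image of q under ψ vanishes (θ-form)
    have hθq : PsiAux.θmap c₀ wmat q = 0 := by
      apply MvPolynomial.funext
      intro y
      rw [map_zero, PsiAux.eval_θmap]
      have hvy : (∑ s, y s • ((vb s : Module.Dual k L))) ∈ V := by
        apply Submodule.sum_mem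
        intro s _
        exact Submodule.smul_mem _ _ (vb s).2
      have hz := hcon _ hvy
      have heval : (fun i => c₀ i + ∑ s, wmat s i * y s)
          = (fun i => (η + ∑ s, y s • ((vb s : Module.Dual k L))) ((bz i : L))) := by
        funext i
        simp only [LinearMap.add_apply, hc₀]
        congr 1
        rw [LinearMap.sum_apply]
        refine Finset.sum_congr rfl fun s _ => ?_
        rw [LinearMap.smul_apply, smul_eq_mul, mul_comm]
      rw [heval]
      exact hz
    -- all W-derivatives of q vanish on c₀
    have hWlist : ∀ v : List (Fin nz → k), (∀ e ∈ v, e ∈ Wset) →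
        MvPolynomial.eval c₀ (PsiAux.DL v q) = 0 := by
      intro v hv
      have hθ : PsiAux.θmap c₀ wmat (PsiAux.DL v q) = 0 := by
        induction v with
        | nil => exact hθq
        | cons e v ih =>
            obtain ⟨a, rfl⟩ := hv e List.mem_cons_self
            rw [PsiAux.DL_cons, PsiAux.θmap_dd c₀ wmat a,
              ih (fun e' he' => hv e' (List.mem_cons_of_mem _ he')), map_zero]
      have h0 : (0 : k) = MvPolynomial.eval (fun i => c₀ i + ∑ s, wmat s i * 0)
          (PsiAux.DL v q) := by
        rw [← PsiAux.eval_θmap, hθ, map_zero]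
      simpa using h0.symm
    -- decomposition of an arbitrary direction
    obtain ⟨Cp, hCp⟩ := Submodule.exists_isCompl (aZ.toSubmodule)
    have hdec : ∀ d : Fin nz → k, ∃ (c : Fin nz → Fin nz → k) (lam' : k) (w : Fin nz → k),
        w ∈ Wset ∧ d = PsiAux.amul c c₀ + w ∧ PsiAux.lder c q = lam' • q := by
      intro d
      let g : ↥aZ →ₗ[k] k := Basis.constr bz k d
      let ζ : Module.Dual k L := g ∘ₗ (aZ.toSubmodule.projectionOnto Cp hCp)
      have hζ : ∀ i, ζ ((bz i : L)) = d i := by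
        intro i
        have h1 := Submodule.linearProjOfIsCompl_apply_left hCp (bz i)
        have h2 : ζ ((bz i : L))
            = g ((aZ.toSubmodule.projectionOnto Cp hCp) ((bz i : L))) := rfl
        rw [h2]
        rw [congrArg g h1]
        exact Basis.constr_basis bz k d i
      have hζtop : ζ ∈ coadOrbit k L η ⊔ V := by
        rw [codisjoint_iff.mp hVc.codisjoint]
        trivial
      obtain ⟨o, ho, vv, hvv, hsum⟩ := Submodule.mem_sup.mp hζtop
      obtain ⟨x', rfl⟩ := ho
      obtain ⟨x₀, hx₀⟩ := hK1c x'
      refine ⟨cmat (-x₀), lam (-x₀), fun i => vv ((bz i : L)), ?_, ?_, ?_⟩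
      · -- membership in Wset
        refine ⟨fun s => vb.repr ⟨vv, hvv⟩ s, ?_⟩
        funext i
        let evi : ↥V →ₗ[k] k := (LinearMap.applyₗ ((bz i : L))) ∘ₗ V.subtype
        have h1 : vv ((bz i : L)) = evi ⟨vv, hvv⟩ := rfl
        rw [h1]
        conv_lhs => rw [← vb.sum_repr ⟨vv, hvv⟩]
        rw [map_sum]
        refine Finset.sum_congr rfl fun s _ => ?_
        rw [map_smul, smul_eq_mul]
        rfl
      · -- the decomposition of d
        funext i
        have h1 : d i = (coadMap k L η x') ((bz i : L)) + vv ((bz i : L)) := by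
          rw [← hζ i, ← hsum]
          rfl
        have h2 : (coadMap k L η x') ((bz i : L)) = -η ⁅x', (bz i : L)⁆ := rfl
        have h3 : η ⁅x', ((bz i : ↥aZ) : L)⁆ = η ⁅(x₀ : L), (bz i : L)⁆ := hx₀ (bz i)
        have h4 : PsiAux.amul (cmat (-x₀)) c₀ i = -η ⁅(x₀ : L), (bz i : L)⁆ := by
          rw [hamul (-x₀) i]
          have hco : ((⁅-x₀, bz i⁆ : ↥aZ) : L) = ⁅-(x₀ : L), (bz i : L)⁆ := rfl
          rw [hco, neg_lie, map_neg]
        have h5 : ((PsiAux.amul (cmat (-x₀)) c₀ + fun i => vv ((bz i : L))) i)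
            = PsiAux.amul (cmat (-x₀)) c₀ i + vv ((bz i : L)) := rfl
        rw [h5, h1, h2, h3, h4]
      · -- semi-invariance
        rw [← hlieDer (-x₀)]
        exact hsemi (-x₀)
    -- conclude q = 0
    exact PsiAux.eq_zero_of_DL_eval c₀ q (PsiAux.main_vanish c₀ q Wset hdec hWlist)
  refine ⟨key, ?_⟩
  intro p₁ hp₁ p₂ hp₂ heq
  by_contra hne
  have hsub : IsSemiInvariant bz (p₁ - p₂) := by
    refine ⟨0, sub_ne_zero.2 hne, fun x y => rfl, fun x => ?_⟩
    have h1 : lieDer bz x p₁ = 0 := hp₁ x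
    have h2 : lieDer bz x p₂ = 0 := hp₂ x
    rw [map_sub, h1, h2, sub_zero]
    rw [LinearMap.zero_apply, zero_smul]
  obtain ⟨v, hv, hne'⟩ := key (p₁ - p₂) hsub
  apply hne'
  have : secEval bz (η + v) (p₁ - p₂)
      = secEval bz (η + v) p₁ - secEval bz (η + v) p₂ := by
    simp only [secEval, map_sub]
  rw [this, heq v hv, sub_self]
end

section
/- Let a be a regular finite-dimensional algebraic Lie algebra over k admitting an adapted pair (h, η), and let n = Σ_{i≠0} a_i^η, where a_i^η = a_i ∩ a^η; then n is a nilpotent subalgebra acting nilpotently on a. For every a ∈ n there exists x ∈ n such that (exp ad x)(h) − h = a. -/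
open Module

section DVlemma

open Module Polynomial

variable {k : Type*} [Field k] [CharZero k]
variable {L : Type*} [LieRing L] [LieAlgebra k L] [Module.Finite k L]

theorem coadStab_abelian (η : Module.Dual k L) (hη : IsRegularCovector k L η)
    {u v : L} (hu : u ∈ coadStab k L η) (hv : v ∈ coadStab k L η) : ⁅u, v⁆ = 0 := by
  by_contra hne
  obtain ⟨ν, hb⟩ : ∃ ν : Module.Dual k L, ν ⁅u, v⁆ ≠ 0 := by
    by_contra hc
    push_neg at hc
    exact hne ((Module.forall_dual_apply_eq_zero_iff k _).mp hc)
  obtain ⟨W, hW⟩ := Submodule.exists_isCompl (coadStab k L η)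
  set K := coadStab k L η with hK
  set r := Module.finrank k W with hr
  let w : Basis (Fin r) k W := Module.finBasis k W
  set uv : Fin 2 → L := ![u, v] with huv
  have huv' : ∀ s : Fin 2, uv s ∈ K := by
    intro s; fin_cases s <;> simpa [huv]
  have skew : ∀ (ξ : Module.Dual k L) (x y : L), ξ ⁅y, x⁆ = -ξ ⁅x, y⁆ := fun ξ x y => by
    rw [← lie_skew x y, map_neg, neg_neg]
  have hKzero : ∀ x ∈ K, ∀ y : L, η ⁅x, y⁆ = 0 := fun x hx => hx
  have hKzero' : ∀ (y : L), ∀ x ∈ K, η ⁅y, x⁆ = 0 := fun y x hx => by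
    rw [skew, hKzero x hx y, neg_zero]
  have lie_sum_left : ∀ (ξ : Module.Dual k L) {α : Type} [Fintype α] (g : α → L) (y : L),
      ξ ⁅∑ i, g i, y⁆ = ∑ i, ξ ⁅g i, y⁆ := by
    intro ξ α _ g y
    induction (Finset.univ : Finset α) using Finset.cons_induction with
    | empty => simp
    | cons a s ha ih => simp [Finset.sum_cons, add_lie, map_add, ih]
  have lie_sum_right : ∀ (ξ : Module.Dual k L) {α : Type} [Fintype α] (x : L) (g : α → L),
      ξ ⁅x, ∑ i, g i⁆ = ∑ i, ξ ⁅x, g i⁆ := by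
    intro ξ α _ x g
    induction (Finset.univ : Finset α) using Finset.cons_induction with
    | empty => simp
    | cons a s ha ih => simp [Finset.sum_cons, lie_add, map_add, ih]
  have wli : LinearIndependent k (fun i => (w i : L)) :=
    w.linearIndependent.map' W.subtype W.ker_subtype
  -- the Gram matrix of the form B_η on W is invertible
  have hdetAW : (Matrix.of fun i j : Fin r => η ⁅(w i : L), (w j : L)⁆).det ≠ 0 := by
    intro hdet
    obtain ⟨c, hc0, hc⟩ := Matrix.exists_vecMul_eq_zero_iff.mpr hdet
    set x : L := ∑ i, c i • (w i : L) with hx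
    have hxW : x ∈ W := Submodule.sum_mem _ fun i _ => Submodule.smul_mem _ _ (w i).2
    have expand : ∀ (y : L), η ⁅x, y⁆ = ∑ i, c i * η ⁅(w i : L), y⁆ := by
      intro y
      rw [hx, lie_sum_left]
      exact Finset.sum_congr rfl fun i _ => by rw [smul_lie, map_smul, smul_eq_mul]
    have hxw : ∀ j : Fin r, η ⁅x, (w j : L)⁆ = 0 := by
      intro j
      have hj := congrFun hc j
      simp only [Matrix.vecMul, dotProduct, Matrix.of_apply, Pi.zero_apply] at hj
      rw [expand]; exact hj
    have hxK : x ∈ K := by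
      intro y
      have hy : y ∈ K ⊔ W := by rw [hW.sup_eq_top]; trivial
      obtain ⟨yk, hyk, yw, hyw, rfl⟩ := Submodule.mem_sup.mp hy
      rw [lie_add, map_add, hKzero' x yk hyk, zero_add]
      have hyw' : yw = ∑ i, w.repr ⟨yw, hyw⟩ i • (w i : L) := by
        have h0 : (⟨yw, hyw⟩ : W) = ∑ i, w.repr ⟨yw, hyw⟩ i • w i := (w.sum_repr _).symm
        calc yw = ((⟨yw, hyw⟩ : W) : L) := rfl
          _ = ((∑ i, w.repr ⟨yw, hyw⟩ i • w i : W) : L) := congrArg _ h0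
          _ = ∑ i, w.repr ⟨yw, hyw⟩ i • (w i : L) := by push_cast; rfl
      rw [hyw', lie_sum_right]
      refine Finset.sum_eq_zero fun i _ => ?_
      rw [lie_smul, map_smul, hxw i, smul_zero]
    have hx0 : x = 0 := (Submodule.disjoint_def.mp hW.disjoint) x hxK hxW
    have hcz : ∀ i, c i = 0 := Fintype.linearIndependent_iff.mp wli c (by rw [← hx, hx0])
    exact hc0 (funext hcz)
  -- the polynomial block matrix
  set N11 : Matrix (Fin r) (Fin r) (Polynomial k) :=
    Matrix.of fun i j => C (η ⁅(w i : L), (w j : L)⁆) + X * C (ν ⁅(w i : L), (w j : L)⁆) with hN11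
  set N12 : Matrix (Fin r) (Fin 2) (Polynomial k) :=
    Matrix.of fun i s => C (η ⁅(w i : L), uv s⁆) + X * C (ν ⁅(w i : L), uv s⁆) with hN12
  set N21 : Matrix (Fin 2) (Fin r) (Polynomial k) :=
    Matrix.of fun s j => C (ν ⁅uv s, (w j : L)⁆) with hN21
  set N22 : Matrix (Fin 2) (Fin 2) (Polynomial k) :=
    Matrix.of fun s s' => C (ν ⁅uv s, uv s'⁆) with hN22
  set Nmat := Matrix.fromBlocks N11 N12 N21 N22 with hNmat
  have hmap0 : (Nmat.map (eval (0 : k))).det ≠ 0 := by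
    have h12 : N12.map (eval (0 : k)) = 0 := by
      ext i s
      simp [hN12, Matrix.map_apply, hKzero' _ _ (huv' s)]
    have h11 : N11.map (eval (0 : k)) = Matrix.of fun i j => η ⁅(w i : L), (w j : L)⁆ := by
      ext i j; simp [hN11, Matrix.map_apply]
    rw [hNmat, Matrix.fromBlocks_map, h11, h12, Matrix.det_fromBlocks_zero₁₂]
    refine mul_ne_zero hdetAW ?_
    rw [Matrix.det_fin_two]
    have e0 : uv 0 = u := rfl
    have e1 : uv 1 = v := rfl
    simp only [hN22, Matrix.map_apply, Matrix.of_apply, eval_C, e0, e1, lie_self, map_zero,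
      zero_mul, zero_sub, neg_ne_zero, skew ν u v]
    simpa using mul_ne_zero hb hb
  have hNdet : Nmat.det ≠ 0 := by
    intro h0
    apply hmap0
    rw [← Polynomial.coe_evalRingHom, ← RingHom.mapMatrix_apply, ← RingHom.map_det, h0, map_zero]
  have : Infinite k := Infinite.of_injective (Nat.cast : ℕ → k) Nat.cast_injective
  obtain ⟨t, hpt⟩ : ∃ t : k, eval t (X * Nmat.det) ≠ 0 := by
    by_contra hcon
    push_neg at hcon
    exact mul_ne_zero Polynomial.X_ne_zero hNdet (Polynomial.zero_of_eval_zero _ hcon)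
  rw [eval_mul, eval_X] at hpt
  have ht0 : t ≠ 0 := left_ne_zero_of_mul hpt
  have htd : eval t Nmat.det ≠ 0 := right_ne_zero_of_mul hpt
  set ξ' : Module.Dual k L := η + t • ν with hxi
  have hξapp : ∀ z : L, ξ' z = η z + t * ν z := fun z => rfl
  set Mt := Nmat.map (eval t) with hMt
  have hMtdet : Mt.det ≠ 0 := by
    rw [hMt, ← Polynomial.coe_evalRingHom, ← RingHom.mapMatrix_apply, ← RingHom.map_det]
    exact htd
  set e : Fin r ⊕ Fin 2 → L := Sum.elim (fun i => (w i : L)) uv with he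
  have hG1 : ∀ (i : Fin r) (j : Fin r ⊕ Fin 2), ξ' ⁅e (Sum.inl i), e j⁆ = Mt (Sum.inl i) j := by
    intro i j
    cases j with
    | inl j =>
        rw [hξapp]
        simp [hMt, hNmat, hN11, he, Matrix.map_apply]
        ring
    | inr s =>
        rw [hξapp]
        simp [hMt, hNmat, hN12, he, Matrix.map_apply]
        ring
  have hG2 : ∀ (s : Fin 2) (j : Fin r ⊕ Fin 2), ξ' ⁅e (Sum.inr s), e j⁆ = t * Mt (Sum.inr s) j := by
    intro s j
    have hz : η ⁅e (Sum.inr s), e j⁆ = 0 := hKzero _ (huv' s) _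
    cases j with
    | inl j =>
        rw [hξapp, hz, zero_add]
        simp [hMt, hNmat, hN21, he, Matrix.map_apply]
    | inr s' =>
        rw [hξapp, hz, zero_add]
        simp [hMt, hNmat, hN22, he, Matrix.map_apply]
  have hrows : ∀ c : Fin r ⊕ Fin 2 → k, (∀ j, ∑ i, c i * ξ' ⁅e i, e j⁆ = 0) → c = 0 := by
    intro c hc
    have hvm : Matrix.vecMul (Sum.elim (fun i => c (Sum.inl i)) fun s => t * c (Sum.inr s)) Mt
        = 0 := by
      funext j
      have hcj := hc j
      rw [Fintype.sum_sum_type] at hcj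
      simp only [Matrix.vecMul, dotProduct, Pi.zero_apply]
      rw [Fintype.sum_sum_type]
      simp only [Sum.elim_inl, Sum.elim_inr]
      rw [← hcj]
      congr 1
      · exact Finset.sum_congr rfl fun i _ => by rw [hG1]
      · exact Finset.sum_congr rfl fun s _ => by rw [hG2]; ring
    by_contra hcne
    apply hMtdet
    apply Matrix.exists_vecMul_eq_zero_iff.mp
    refine ⟨_, ?_, hvm⟩
    intro h0
    apply hcne
    funext i
    cases i with
    | inl i => simpa using congrFun h0 (Sum.inl i)
    | inr s =>
        have := congrFun h0 (Sum.inr s)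
        simp only [Sum.elim_inr, Pi.zero_apply, mul_eq_zero] at this
        simpa [Pi.zero_apply] using this.resolve_left ht0
  set Φ : L →ₗ[k] (Fin r ⊕ Fin 2 → k) :=
    LinearMap.pi fun j => -(ξ' ∘ₗ (LieAlgebra.ad k L (e j))) with hPhi
  have hΦ : ∀ (x : L) (j : Fin r ⊕ Fin 2), Φ x j = ξ' ⁅x, e j⁆ := by
    intro x j
    rw [skew ξ' (e j) x]
    simp [hPhi, LinearMap.pi_apply, LieAlgebra.ad_apply]
  have hsub : coadStab k L ξ' ≤ LinearMap.ker Φ := by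
    intro z hz
    rw [LinearMap.mem_ker]
    funext j
    rw [hΦ]
    exact hz (e j)
  have hli : LinearIndependent k fun i => Φ (e i) := by
    rw [Fintype.linearIndependent_iff]
    intro g hg
    have hg' : ∀ j, ∑ i, g i * ξ' ⁅e i, e j⁆ = 0 := by
      intro j
      have := congrFun hg j
      simpa [Finset.sum_apply, Pi.smul_apply, smul_eq_mul, hΦ] using this
    intro i
    rw [hrows g hg']
    rfl
  have hspan := finrank_span_eq_card hli
  have hle2 : Submodule.span k (Set.range fun i => Φ (e i)) ≤ LinearMap.range Φ := by
    rw [Submodule.span_le]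
    rintro _ ⟨i, rfl⟩
    exact ⟨e i, rfl⟩
  have hrk : r + 2 ≤ Module.finrank k (LinearMap.range Φ) := by
    have hmono := Submodule.finrank_mono hle2
    rw [hspan] at hmono
    simpa using hmono
  have hkerineq : Module.finrank k (coadStab k L ξ') ≤ Module.finrank k (LinearMap.ker Φ) :=
    Submodule.finrank_mono hsub
  have hrn := LinearMap.finrank_range_add_finrank_ker Φ
  have hcompl := Submodule.finrank_add_eq_of_isCompl hW
  have hidx : lieIndex k L ≤ Module.finrank k (coadStab k L ξ') :=
    ciInf_le' (fun ξ : Module.Dual k L => Module.finrank k (coadStab k L ξ)) ξ'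
  have hregK : Module.finrank k (coadStab k L η) = lieIndex k L := hη
  rw [← hK] at hregK
  rw [← hr] at hcompl
  omega

end DVlemma
section NilAux

variable {k : Type*} [Field k] [CharZero k]
variable {L : Type*} [LieRing L] [LieAlgebra k L] [Module.Finite k L]

theorem ad_nilpotent_of_eigenvector (h : L)
    (hsemi : ⨆ μ : k, (LieAlgebra.ad k L h).eigenspace μ = ⊤)
    {μ : k} (hμ : μ ≠ 0) {x : L} (hx : x ∈ (LieAlgebra.ad k L h).eigenspace μ) :
    IsNilpotent (LieAlgebra.ad k L x) := by
  set f := LieAlgebra.ad k L x with hf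
  have hxh : ⁅h, x⁆ = μ • x := by
    have := Module.End.mem_eigenspace_iff.mp hx
    simpa [LieAlgebra.ad_apply] using this
  have hstep : ∀ (ν : k) (y : L), y ∈ (LieAlgebra.ad k L h).eigenspace ν →
      f y ∈ (LieAlgebra.ad k L h).eigenspace (ν + μ) := by
    intro ν y hy
    rw [Module.End.mem_eigenspace_iff] at hy ⊢
    rw [LieAlgebra.ad_apply] at hy ⊢
    rw [hf, LieAlgebra.ad_apply, leibniz_lie, hxh, hy, smul_lie, lie_smul, add_smul]
    abel
  have hiter : ∀ (ν : k) (y : L), y ∈ (LieAlgebra.ad k L h).eigenspace ν → ∀ j : ℕ,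
      (f ^ j) y ∈ (LieAlgebra.ad k L h).eigenspace (ν + (j : k) * μ) := by
    intro ν y hy j
    induction j with
    | zero => simpa using hy
    | succ n ih =>
        have h2 := hstep _ _ ih
        have h3 : (f ^ (n + 1)) y = f ((f ^ n) y) := by rw [pow_succ', Module.End.mul_apply]
        rw [h3]
        convert h2 using 2
        push_cast
        ring
  have hpt : ∀ (ν : k) (y : L), y ∈ (LieAlgebra.ad k L h).eigenspace ν →
      ∃ m : ℕ, (f ^ m) y = 0 := by
    intro ν y hy
    by_contra hcon
    push_neg at hcon
    have hinj : Function.Injective fun j : ℕ => ν + (j : k) * μ := by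
      intro a b hab
      simp only at hab
      have : (a : k) = (b : k) := mul_right_cancel₀ hμ (add_left_cancel hab)
      exact_mod_cast this
    have hev : ∀ j : ℕ, (LieAlgebra.ad k L h).HasEigenvector (ν + (j : k) * μ) ((f ^ j) y) :=
      fun j => ⟨hiter ν y hy j, hcon j⟩
    have hli := Module.End.eigenvectors_linearIndependent' (LieAlgebra.ad k L h) _ hinj _ hev
    have : Finite ℕ := hli.finite
    exact not_finite ℕ
  have hmono : ∀ {y : L} {m n : ℕ}, (f ^ m) y = 0 → m ≤ n → (f ^ n) y = 0 := by
    intro y m n hm hmn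
    rw [← Nat.sub_add_cancel hmn, pow_add, Module.End.mul_apply, hm, map_zero]
  set T : Submodule k L :=
    { carrier := {y | ∃ m : ℕ, (f ^ m) y = 0}
      zero_mem' := ⟨0, by simp⟩
      add_mem' := by
        rintro a b ⟨ma, hma⟩ ⟨mb, hmb⟩
        exact ⟨max ma mb, by
          rw [map_add, hmono hma (le_max_left _ _), hmono hmb (le_max_right _ _), add_zero]⟩
      smul_mem' := by
        rintro c a ⟨m, hm⟩
        exact ⟨m, by rw [map_smul, hm, smul_zero]⟩ } with hT
  have hTtop : ∀ y : L, y ∈ T := by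
    have hle : (⊤ : Submodule k L) ≤ T := by
      rw [← hsemi]
      exact iSup_le fun ν y hy => hpt ν y hy
    exact fun y => hle trivial
  have hbb : ∀ i : Fin (Module.finrank k L), ∃ m : ℕ, (f ^ m) (Module.finBasis k L i) = 0 :=
    fun i => hTtop _
  choose m hm using hbb
  refine ⟨Finset.univ.sup m, ?_⟩
  refine (Module.finBasis k L).ext fun i => ?_
  rw [LinearMap.zero_apply]
  exact hmono (hm i) (Finset.le_sup (Finset.mem_univ i))

end NilAux
/-- For a regular Lie algebra with adapted pair `(h, η)`, the sum
`n = Σ_{i ≠ 0} a_i^η` of the nonzero `ad h` eigenspace components of the stabiliser `a^η`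
is a nilpotent subalgebra acting nilpotently on `a`, and for every `a ∈ n` there is `x ∈ n`
with `(exp ad x)(h) - h = a`. -/
theorem exp_of_stabilizer_moves_h
    (k : Type*) [Field k] [IsAlgClosed k] [CharZero k]
    (L : Type*) [LieRing L] [LieAlgebra k L] [Module.Finite k L]
    (hreg : IsRegularLieAlgebra k L)
    (h : L) (η : Module.Dual k L) (hpair : IsAdaptedPair k L h η) :
    ∀ N : Submodule k L,
      N = (⨆ μ : {μ : k // μ ≠ 0},
            (LieAlgebra.ad k L h).eigenspace (μ : k) ⊓ coadStab k L η) →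
      (∀ x ∈ N, ∀ y ∈ N, ⁅x, y⁆ ∈ N) ∧
      (∀ x ∈ N, IsNilpotent (LieAlgebra.ad k L x)) ∧
      ∀ a ∈ N, ∃ x ∈ N, expAd k L x h - h = a := by
  intro N hN
  subst hN
  have hab : ∀ x ∈ coadStab k L η, ∀ y ∈ coadStab k L η, ⁅x, y⁆ = 0 :=
    fun x hx y hy => coadStab_abelian η hpair.regular hx hy
  have hNK : (⨆ μ : {μ : k // μ ≠ 0},
      (LieAlgebra.ad k L h).eigenspace (μ : k) ⊓ coadStab k L η) ≤ coadStab k L η :=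
    iSup_le fun μ => inf_le_right
  refine ⟨?_, ?_, ?_⟩
  · intro x hx y hy
    rw [hab x (hNK hx) y (hNK hy)]
    exact zero_mem _
  · intro x hx
    have key : x ∈ coadStab k L η ∧ IsNilpotent (LieAlgebra.ad k L x) := by
      refine Submodule.iSup_induction'
        (motive := fun z _ => z ∈ coadStab k L η ∧ IsNilpotent (LieAlgebra.ad k L z))
        _ ?_ ?_ ?_ hx
      · rintro μ z hz
        have hz' := Submodule.mem_inf.mp hz
        exact ⟨hz'.2, ad_nilpotent_of_eigenvector h hpair.semisimple μ.2 hz'.1⟩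
      · exact ⟨zero_mem _, by rw [map_zero]; exact IsNilpotent.zero⟩
      · rintro z1 z2 _ _ ⟨hz1K, hz1n⟩ ⟨hz2K, hz2n⟩
        refine ⟨add_mem hz1K hz2K, ?_⟩
        rw [map_add]
        have hbr : ⁅z1, z2⁆ = (0 : L) := hab _ hz1K _ hz2K
        have hcomm : Commute (LieAlgebra.ad k L z1) (LieAlgebra.ad k L z2) := by
          show LieAlgebra.ad k L z1 * LieAlgebra.ad k L z2 = LieAlgebra.ad k L z2 * LieAlgebra.ad k L z1
          refine LinearMap.ext fun y => ?_
          simp only [Module.End.mul_apply, LieAlgebra.ad_apply]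
          rw [leibniz_lie, hbr, zero_lie, zero_add]
        exact hcomm.isNilpotent_add hz1n hz2n
    exact key.2
  · intro a ha
    have key : ∀ (b : L), b ∈ (⨆ μ : {μ : k // μ ≠ 0},
        (LieAlgebra.ad k L h).eigenspace (μ : k) ⊓ coadStab k L η) →
        ∃ x ∈ (⨆ μ : {μ : k // μ ≠ 0},
          (LieAlgebra.ad k L h).eigenspace (μ : k) ⊓ coadStab k L η), ⁅x, h⁆ = b := by
      intro b hb
      refine Submodule.iSup_induction'
        (motive := fun z _ => ∃ x ∈ (⨆ μ : {μ : k // μ ≠ 0},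
          (LieAlgebra.ad k L h).eigenspace (μ : k) ⊓ coadStab k L η), ⁅x, h⁆ = z)
        _ ?_ ⟨0, zero_mem _, by simp⟩ ?_ hb
      · rintro μ z hz
        have hz' := Submodule.mem_inf.mp hz
        refine ⟨(-(μ : k)⁻¹) • z,
          Submodule.mem_iSup_of_mem μ (Submodule.smul_mem _ _ hz), ?_⟩
        have hz1 : ⁅h, z⁆ = (μ : k) • z := by
          have := Module.End.mem_eigenspace_iff.mp hz'.1
          simpa [LieAlgebra.ad_apply] using this
        have hz2 : ⁅z, h⁆ = -((μ : k) • z) := by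
          rw [← hz1, ← lie_skew h z, neg_neg]
        rw [smul_lie, hz2, smul_neg, neg_smul, neg_neg, smul_smul,
          inv_mul_cancel₀ μ.2, one_smul]
      · rintro z1 z2 _ _ ⟨x1, hx1, hx1e⟩ ⟨x2, hx2, hx2e⟩
        exact ⟨x1 + x2, add_mem hx1 hx2, by rw [add_lie, hx1e, hx2e]⟩
    obtain ⟨x, hxN, hxh⟩ := key a ha
    refine ⟨x, hxN, ?_⟩
    by_cases hdim : Module.finrank k L = 0
    · have : Subsingleton L := Module.finrank_zero_iff.mp hdim
      exact Subsingleton.elim _ _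
    · set f := LieAlgebra.ad k L x with hf
      have hfh : f h = a := by rw [hf, LieAlgebra.ad_apply, hxh]
      have hf2 : (f ^ 2) h = 0 := by
        rw [pow_two, Module.End.mul_apply, hfh, hf, LieAlgebra.ad_apply]
        exact hab x (hNK hxN) a (hNK ha)
      have hfi : ∀ i : ℕ, 2 ≤ i → (f ^ i) h = 0 := by
        intro i hi
        obtain ⟨j, rfl⟩ := Nat.exists_eq_add_of_le hi
        rw [add_comm 2 j, pow_add, Module.End.mul_apply, hf2, map_zero]
      have hn1 : 1 ≤ Module.finrank k L := Nat.pos_of_ne_zero hdim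
      have hsum : expAd k L x h = ∑ i ∈ Finset.range (Module.finrank k L + 1),
          ((i.factorial : k)⁻¹ • (f ^ i)) h := by
        rw [expAd, LinearMap.sum_apply]
      rw [hsum]
      have hsub : Finset.range 2 ⊆ Finset.range (Module.finrank k L + 1) := by
        apply Finset.range_subset_range.mpr
        omega
      rw [← Finset.sum_subset hsub (fun i _ hialt => by
        have : 2 ≤ i := by simp at hialt; omega
        rw [LinearMap.smul_apply, hfi i this, smul_zero])]
      rw [Finset.sum_range_succ, Finset.sum_range_one]
      simp only [LinearMap.smul_apply, pow_zero, Module.End.one_apply, pow_one, hfh,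
        Nat.factorial_zero, Nat.factorial_one, Nat.cast_one, inv_one, one_smul]
      exact add_sub_cancel_left h a
end
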